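/- Let A be a unital complex topological algebra whose unit group is open, and let U be a balanced (circled) open neighborhood of 0 such that 1 + U consists of invertible elements. Then every algebra homomorphism χ : A → ℂ with χ(1) = 1 satisfies |χ(u)| < 1 for all u ∈ U. In particular, every such character is continuous. -/

import Mathlib

/-- Let `A` be a unital complex topological algebra with open unit group, and `U` a
balanced open neighborhood of `0` with `1 + U` consisting of invertible elements. Then
every unital algebra homomorphism `χ : A → ℂ` satisfies `|χ(u)| < 1` for `u ∈ U`; in
particular every such character is continuous. -/
theorem stmt1 {A : Type*} [Ring A] [Algebra ℂ A] [TopologicalSpace A] [IsTopologicalRing A]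
    (hopen : IsOpen {a : A | IsUnit a})
    (U : Set A) (hUopen : IsOpen U) (hU0 : (0 : A) ∈ U) (hbal : Balanced ℂ U)
    (hinv : ∀ u ∈ U, IsUnit (1 + u))
    (χ : A →ₐ[ℂ] ℂ) :
    (∀ u ∈ U, ‖χ u‖ < 1) ∧ Continuous fun a => χ a := by
  have key : ∀ u ∈ U, ‖χ u‖ < 1 := by
    intro u hu
    by_contra h
    push_neg at h
    have hne : χ u ≠ 0 := by
      intro h0
      rw [h0] at h
      simp at h
      linarith
    set γ : ℂ := -(χ u)⁻¹ with hγdef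
    have hγ : ‖γ‖ ≤ 1 := by
      have : ‖(χ u)⁻¹‖ ≤ 1 := by
        rw [norm_inv]
        exact inv_le_one_of_one_le₀ h
      simpa [hγdef] using this
    have hmem : γ • u ∈ U := hbal γ hγ (Set.smul_mem_smul_set hu)
    have hunit : IsUnit (χ (1 + γ • u)) := (hinv _ hmem).map χ
    have hzero : χ (1 + γ • u) = 0 := by
      rw [map_add, map_one, map_smul, hγdef, smul_eq_mul]
      field_simp
      norm_num
    rw [hzero] at hunit
    exact hunit.ne_zero rfl
  refine ⟨key, ?_⟩
  have hat0 : ContinuousAt (fun a : A => χ a) 0 := by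
    rw [ContinuousAt, map_zero, Metric.tendsto_nhds]
    intro ε hε
    set c : ℂ := ((ε / 2 : ℝ) : ℂ) with hcdef
    have hc : c ≠ 0 := by
      simp [hcdef]
      intro h0
      linarith
    have hcont : Continuous fun x : A => c⁻¹ • x := by
      have : (fun x : A => c⁻¹ • x) = fun x : A => algebraMap ℂ A c⁻¹ * x := by
        funext x; rw [Algebra.smul_def]
      rw [this]
      exact continuous_const.mul continuous_id
    have hopenV : IsOpen {x : A | c⁻¹ • x ∈ U} := hUopen.preimage hcont
    have h0V : (0 : A) ∈ {x : A | c⁻¹ • x ∈ U} := by simpa using hU0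
    filter_upwards [hopenV.mem_nhds h0V] with x hx
    have hχx : χ x = c * χ (c⁻¹ • x) := by
      rw [map_smul, smul_eq_mul, ← mul_assoc, mul_inv_cancel₀ hc, one_mul]
    rw [dist_zero_right, hχx]
    have habs : ‖c * χ (c⁻¹ • x)‖ < ‖c‖ * 1 := by
      rw [norm_mul]
      exact mul_lt_mul_of_pos_left (key _ hx) (norm_pos_iff.mpr hc)
    have hcabs : ‖c‖ = ε / 2 := by
      rw [hcdef, Complex.norm_real, Real.norm_eq_abs]
      exact abs_of_pos (by linarith)
    calc ‖c * χ (c⁻¹ • x)‖ < ‖c‖ * 1 := habs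
      _ = ε / 2 := by rw [hcabs, mul_one]
      _ < ε := by linarith
  exact continuous_of_continuousAt_zero
    (χ.toLinearMap.toAddMonoidHom) hat0
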